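/- Let $T$ be a real symmetric $3 \times 3$ matrix with $\operatorname{tr}(T) = 0$, let $V$ be a real inner product space, and let $v_1, v_2, v_3 \in V$. Then $\big| \sum_{i,j=1}^{3} T_{ij} \langle v_i, v_j \rangle \big| \leq \sqrt{2/3}\, \|T\|_F \sum_{i=1}^{3} \|v_i\|^2$. -/

import Mathlib

open Matrix

/-- Frobenius norm of a real square matrix. -/
noncomputable def frobNorm {n : ℕ} (M : Matrix (Fin n) (Fin n) ℝ) : ℝ :=
  Real.sqrt (Matrix.trace (Mᵀ * M))

/-- Lemma 2.2 of the paper: for a trace-free symmetric `3 × 3` matrix `T` and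
vectors `v₁, v₂, v₃` in a real inner product space,
`|∑ T i j ⟪v i, v j⟫| ≤ √(2/3) ‖T‖_F ∑ ‖v i‖²`. -/
theorem traceless_symmetric_bilinear_le
    (T : Matrix (Fin 3) (Fin 3) ℝ) (hT : Tᵀ = T) (htr : Matrix.trace T = 0)
    (V : Type*) [NormedAddCommGroup V] [InnerProductSpace ℝ V]
    (v : Fin 3 → V) :
    |∑ i : Fin 3, ∑ j : Fin 3, T i j * (inner ℝ (v i) (v j) : ℝ)| ≤
      Real.sqrt (2 / 3) * frobNorm T * ∑ i : Fin 3, ‖v i‖ ^ 2 := by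
  set S : ℝ := ∑ i : Fin 3, ‖v i‖ ^ 2 with hSdef
  have hS0 : 0 ≤ S := Finset.sum_nonneg fun i _ => sq_nonneg _
  set G : Fin 3 → Fin 3 → ℝ := fun i j => (inner ℝ (v i) (v j) : ℝ) with hGdef
  set G' : Fin 3 → Fin 3 → ℝ :=
    fun i j => G i j - (S / 3) * (if i = j then 1 else 0) with hG'def
  set A : ℝ := ∑ i : Fin 3, ∑ j : Fin 3, (T i j) ^ 2 with hAdef
  have hA0 : 0 ≤ A := Finset.sum_nonneg fun i _ => Finset.sum_nonneg fun j _ => sq_nonneg _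
  have hdiag : ∀ i, G i i = ‖v i‖ ^ 2 := fun i => real_inner_self_eq_norm_sq _
  -- the Gram matrix entries squared sum to at most S^2
  have hGsum : ∑ i : Fin 3, ∑ j : Fin 3, (G i j) ^ 2 ≤ S ^ 2 := by
    have : S ^ 2 = ∑ i : Fin 3, ∑ j : Fin 3, (‖v i‖ * ‖v j‖) ^ 2 := by
      rw [hSdef, sq, Finset.sum_mul_sum]
      refine Finset.sum_congr rfl fun i _ => Finset.sum_congr rfl fun j _ => by ring
    rw [this]
    refine Finset.sum_le_sum fun i _ => Finset.sum_le_sum fun j _ => ?_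
    have h1 := abs_real_inner_le_norm (v i) (v j)
    calc (G i j) ^ 2 = |G i j| ^ 2 := (sq_abs _).symm
      _ ≤ (‖v i‖ * ‖v j‖) ^ 2 := by
          apply pow_le_pow_left₀ (abs_nonneg _) h1
  -- trace identity
  have htrG : ∑ i : Fin 3, G i i = S := by
    rw [hSdef]; exact Finset.sum_congr rfl fun i _ => hdiag i
  -- expand the sum of squares of G'
  have hexp : ∑ i : Fin 3, ∑ j : Fin 3, (G' i j) ^ 2
      = (∑ i : Fin 3, ∑ j : Fin 3, (G i j) ^ 2) - (2 * S / 3) * (∑ i : Fin 3, G i i)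
        + S ^ 2 / 3 := by
    simp only [hG'def, Fin.sum_univ_three, Fin.ext_iff]
    norm_num
    ring
  have hB : ∑ i : Fin 3, ∑ j : Fin 3, (G' i j) ^ 2 ≤ 2 / 3 * S ^ 2 := by
    rw [hexp, htrG]; nlinarith [hGsum]
  have hB0 : 0 ≤ ∑ i : Fin 3, ∑ j : Fin 3, (G' i j) ^ 2 :=
    Finset.sum_nonneg fun i _ => Finset.sum_nonneg fun j _ => sq_nonneg _
  -- using tracelessness, replace G by G'
  have hrepl : ∑ i : Fin 3, ∑ j : Fin 3, T i j * G i j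
      = ∑ i : Fin 3, ∑ j : Fin 3, T i j * G' i j := by
    have htr3 : ∑ i : Fin 3, T i i = 0 := by
      simpa [Matrix.trace, Matrix.diag] using htr
    simp only [hG'def, Fin.sum_univ_three, Fin.ext_iff] at htr3 ⊢
    norm_num
    linear_combination (S / 3) * htr3
  -- Cauchy–Schwarz
  have hCS : (∑ i : Fin 3, ∑ j : Fin 3, T i j * G' i j) ^ 2
      ≤ A * (∑ i : Fin 3, ∑ j : Fin 3, (G' i j) ^ 2) := by
    have := Finset.sum_mul_sq_le_sq_mul_sq (Finset.univ : Finset (Fin 3 × Fin 3))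
      (fun p => T p.1 p.2) (fun p => G' p.1 p.2)
    simpa [Fintype.sum_prod_type, hAdef] using this
  have hsq : (∑ i : Fin 3, ∑ j : Fin 3, T i j * G i j) ^ 2 ≤ A * (2 / 3 * S ^ 2) := by
    rw [hrepl]
    calc (∑ i : Fin 3, ∑ j : Fin 3, T i j * G' i j) ^ 2
        ≤ A * (∑ i : Fin 3, ∑ j : Fin 3, (G' i j) ^ 2) := hCS
      _ ≤ A * (2 / 3 * S ^ 2) := by apply mul_le_mul_of_nonneg_left hB hA0
  -- identify the Frobenius norm
  have hF : frobNorm T = Real.sqrt A := by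
    unfold frobNorm
    congr 1
    simp only [Matrix.trace, Matrix.diag, Matrix.mul_apply, Matrix.transpose_apply, hAdef,
      Fin.sum_univ_three]
    ring
  -- conclude
  have habs : |∑ i : Fin 3, ∑ j : Fin 3, T i j * G i j|
      ≤ Real.sqrt (A * (2 / 3 * S ^ 2)) := by
    rw [← Real.sqrt_sq_eq_abs]
    exact Real.sqrt_le_sqrt hsq
  calc |∑ i : Fin 3, ∑ j : Fin 3, T i j * G i j|
      ≤ Real.sqrt (A * (2 / 3 * S ^ 2)) := habs
    _ = Real.sqrt (2 / 3) * Real.sqrt A * S := by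
        rw [show A * (2 / 3 * S ^ 2) = 2 / 3 * A * S ^ 2 by ring,
          Real.sqrt_mul (by positivity), Real.sqrt_mul (by norm_num),
          Real.sqrt_sq hS0]
    _ = Real.sqrt (2 / 3) * frobNorm T * S := by rw [hF]
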